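/- For every integer d ≥ 2, there exist at least three pairwise mutually unbiased orthonormal bases of ℂ^d, i.e., N(d) ≥ 3. -/

import Mathlib

open scoped InnerProductSpace

/-- `B` is a family of `m` pairwise mutually unbiased orthonormal bases of
`ℂ^d`. -/
def IsMUBFamily (d m : ℕ) (B : Fin m → Fin d → EuclideanSpace ℂ (Fin d)) : Prop :=
  (∀ i, Orthonormal ℂ (B i) ∧ Submodule.span ℂ (Set.range (B i)) = ⊤) ∧
  (∀ i j, i ≠ j → ∀ a b, ‖⟪B i a, B j b⟫_ℂ‖ ^ 2 = 1 / d)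

/-- `N d` is the maximal number of pairwise mutually unbiased orthonormal bases
of `ℂ^d`. -/
noncomputable def N (d : ℕ) : ℕ :=
  sSup {m : ℕ | ∃ B : Fin m → Fin d → EuclideanSpace ℂ (Fin d), IsMUBFamily d m B}

open Complex Finset

noncomputable def ee (d : ℕ) (n : ℤ) : ℂ := Complex.exp (Real.pi * Complex.I * n / d)

lemma ee_add (d : ℕ) (m n : ℤ) : ee d (m + n) = ee d m * ee d n := by
  rw [ee, ee, ee, ← Complex.exp_add]
  congr 1
  push_cast
  ring

lemma ee_zero (d : ℕ) : ee d 0 = 1 := by simp [ee]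

lemma conj_ee (d : ℕ) (n : ℤ) : (starRingEnd ℂ) (ee d n) = ee d (-n) := by
  rw [ee, ee, ← Complex.exp_conj]
  congr 1
  simp [map_div₀, map_mul]

lemma abs_ee (d : ℕ) (n : ℤ) : ‖ee d n‖ = 1 := by
  rw [ee, Complex.norm_exp]
  convert Real.exp_zero using 2
  have : (Real.pi : ℂ) * Complex.I * n / d = ((Real.pi * n / d : ℝ)) * Complex.I := by
    push_cast; ring
  rw [this, Complex.mul_I_re]
  simp

lemma ee_two_eq_one_iff (d : ℕ) (hd : d ≠ 0) (k : ℤ) : ee d (2 * k) = 1 ↔ (d : ℤ) ∣ k := by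
  rw [ee, Complex.exp_eq_one_iff]
  constructor
  · rintro ⟨n, hn⟩
    have hπ : (Real.pi : ℂ) ≠ 0 := by exact_mod_cast Real.pi_ne_zero
    have hdc : (d : ℂ) ≠ 0 := by exact_mod_cast hd
    field_simp at hn
    have h2 : (Real.pi : ℂ) * Complex.I * 2 * k = (Real.pi : ℂ) * Complex.I * 2 * (n * d) := by
      push_cast at hn
      linear_combination (↑Real.pi * Complex.I) * hn
    have h3 : (k : ℂ) = (n : ℂ) * d :=
      mul_left_cancel₀ (by simp [hπ, Complex.I_ne_zero]) h2
    have h4 : k = n * (d : ℤ) := by exact_mod_cast h3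
    exact ⟨n, by linarith⟩
  · rintro ⟨n, rfl⟩
    refine ⟨n, ?_⟩
    have hdc : (d : ℂ) ≠ 0 := by exact_mod_cast hd
    field_simp
    push_cast
    ring

lemma ee_congr (d : ℕ) (hd : d ≠ 0) {m n : ℤ} (h : (2 * d : ℤ) ∣ (m - n)) :
    ee d m = ee d n := by
  obtain ⟨t, ht⟩ := h
  have : m = n + 2 * (d * t) := by linarith
  have h1 : ee d (2 * (↑d * t)) = 1 := (ee_two_eq_one_iff d hd _).2 ⟨t, rfl⟩
  rw [this, ee_add, h1, mul_one]

lemma ee_nat_mul (d : ℕ) (a : ℕ) (k : ℤ) : ee d (2 * a * k) = (ee d (2 * k)) ^ a := by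
  induction a with
  | zero => simp [ee_zero]
  | succ n ih =>
    have : (2 : ℤ) * (n + 1) * k = 2 * n * k + 2 * k := by ring
    push_cast
    push_cast at ih
    rw [this, ee_add, ih, pow_succ]

lemma sum_ee (d : ℕ) (hd : d ≠ 0) (k : ℤ) :
    ∑ a ∈ range d, ee d (2 * a * k) = if (d : ℤ) ∣ k then (d : ℂ) else 0 := by
  have key : ∀ a : ℕ, ee d (2 * a * k) = (ee d (2 * k)) ^ a := fun a => ee_nat_mul d a k
  simp_rw [key]
  by_cases h : (d : ℤ) ∣ k
  · rw [if_pos h]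
    have : ee d (2 * k) = 1 := (ee_two_eq_one_iff d hd k).2 h
    simp [this]
  · rw [if_neg h]
    have hne : ee d (2 * k) ≠ 1 := fun hh => h ((ee_two_eq_one_iff d hd k).1 hh)
    rw [geom_sum_eq hne]
    have : ee d (2 * k) ^ d = 1 := by
      rw [← ee_nat_mul]
      have : (2 : ℤ) * (d : ℕ) * k = 2 * ((d : ℤ) * k) := by push_cast; ring
      rw [this]
      exact (ee_two_eq_one_iff d hd _).2 ⟨k, rfl⟩
    rw [this]
    simp

lemma zmod_sum_eq (d : ℕ) [NeZero d] (g : ℕ → ℂ) :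
    ∑ a : ZMod d, g a.val = ∑ a ∈ range d, g a := by
  apply Finset.sum_nbij' (i := fun (a : ZMod d) => a.val) (j := fun a => (a : ZMod d))
  · intro a _; exact mem_range.2 a.val_lt
  · intro a _; exact mem_univ _
  · intro a _; exact ZMod.natCast_rightInverse a
  · intro a ha; exact ZMod.val_cast_of_lt (mem_range.1 ha)
  · intro a _; rfl

-- periodicity of the Gauss phase
lemma E_congr (d : ℕ) (hd : d ≠ 0) (k : ℤ) {a a' : ℤ} (h : (d : ℤ) ∣ (a - a')) :
    ee d ((d+1)*a^2 + 2*a*k) = ee d ((d+1)*a'^2 + 2*a'*k) := by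
  obtain ⟨t, ht⟩ := h
  obtain ⟨c, hc⟩ : (2 : ℤ) ∣ (d * (d+1)) := (Int.even_mul_succ_self d).two_dvd
  apply ee_congr d hd
  refine ⟨(d+1)*a'*t + k*t + c*t^2, ?_⟩
  have ha : a = a' + d * t := by linarith
  subst ha
  linear_combination ((d:ℤ) * t^2) * hc

theorem gauss (d : ℕ) (hd : d ≠ 0) (k : ℤ) :
    (∑ a ∈ range d, ee d ((d+1)*a^2 + 2*a*k)) *
      (starRingEnd ℂ) (∑ a ∈ range d, ee d ((d+1)*a^2 + 2*a*k)) = d := by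
  haveI : NeZero d := ⟨hd⟩
  set F : ZMod d → ℂ := fun a => ee d ((d+1)*(a.val:ℤ)^2 + 2*a.val*k) with hF
  have hS : ∑ a ∈ range d, ee d ((d+1)*a^2 + 2*a*k) = ∑ a : ZMod d, F a := by
    rw [hF]
    exact (zmod_sum_eq d (fun a => ee d ((d+1)*(a:ℤ)^2 + 2*a*k))).symm
  rw [hS, map_sum, Finset.sum_mul_sum]
  rw [Finset.sum_comm]
  have step1 : ∀ b : ZMod d, ∑ i : ZMod d, F i * (starRingEnd ℂ) (F b)
      = ∑ h : ZMod d, F (b + h) * (starRingEnd ℂ) (F b) := by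
    intro b
    exact (Fintype.sum_equiv (Equiv.addLeft b) _ _ (fun h => rfl)).symm
  simp_rw [step1]
  rw [Finset.sum_comm]
  have step2 : ∀ h b : ZMod d, F (b + h) * (starRingEnd ℂ) (F b)
      = ee d ((d+1)*(h.val:ℤ)^2 + 2*h.val*k) * ee d (2*(b.val:ℤ)*((d+1)*h.val)) := by
    intro h b
    have hcong : ee d ((d+1)*(((b+h).val:ℤ))^2 + 2*((b+h).val:ℤ)*k)
        = ee d ((d+1)*(((b.val:ℤ) + h.val))^2 + 2*((b.val:ℤ) + h.val)*k) := by
      apply E_congr d hd k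
      rw [ZMod.val_add b h]
      have h2 := Nat.mod_add_div (b.val + h.val) d
      refine ⟨-(((b.val + h.val)/d : ℕ) : ℤ), ?_⟩
      generalize hm : (b.val + h.val) % d = r at h2 ⊢
      generalize hq : (b.val + h.val) / d = q at h2 ⊢
      have h2' : (r:ℤ) + (d:ℤ)*(q:ℤ) = (b.val:ℤ) + (h.val:ℤ) := by exact_mod_cast h2
      push_cast
      linarith
    show ee d ((d+1)*(((b+h).val:ℤ))^2 + 2*((b+h).val:ℤ)*k)
        * (starRingEnd ℂ) (ee d ((d+1)*((b.val:ℤ))^2 + 2*(b.val:ℤ)*k)) = _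
    rw [conj_ee, hcong, ← ee_add, ← ee_add]
    congr 1
    ring
  simp_rw [step2]
  have step3 : ∀ h : ZMod d,
      ∑ b : ZMod d, ee d ((d+1)*(h.val:ℤ)^2 + 2*h.val*k) * ee d (2*(b.val:ℤ)*((d+1)*h.val))
      = if h = 0 then (d : ℂ) else 0 := by
    intro h
    rw [← Finset.mul_sum]
    have : ∑ b : ZMod d, ee d (2*(b.val:ℤ)*((d+1)*h.val))
        = ∑ a ∈ range d, ee d (2*(a:ℤ)*((d+1)*h.val)) :=
      zmod_sum_eq d (fun a => ee d (2*(a:ℤ)*((d+1)*h.val)))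
    rw [this, sum_ee d hd]
    by_cases h0 : h = 0
    · subst h0
      simp [ZMod.val_zero, ee_zero]
    · have hnd : ¬ ((d:ℤ) ∣ (d+1)*(h.val:ℤ)) := by
        intro H
        have hdd : (d:ℤ) ∣ (d:ℤ) * (h.val:ℤ) := Dvd.intro _ rfl
        have H' : (d:ℤ) ∣ (d:ℤ) * (h.val:ℤ) + (h.val:ℤ) := by
          convert H using 1; ring
        have h1 : (d:ℤ) ∣ (h.val:ℤ) := (dvd_add_right hdd).mp H'
        have h2 : (d:ℕ) ∣ h.val := by exact_mod_cast h1
        have h3 : h.val = 0 := Nat.eq_zero_of_dvd_of_lt h2 h.val_lt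
        exact h0 (by rwa [← ZMod.val_eq_zero])
      rw [if_neg hnd, mul_zero, if_neg h0]
  simp_rw [step3]
  simp

noncomputable def V (d : ℕ) (t : ℕ) (b : Fin d) : EuclideanSpace ℂ (Fin d) :=
  WithLp.toLp 2 (fun a => ee d (t*(d+1)*((a:ℕ):ℤ)^2 + 2*a*b) / (Real.sqrt d : ℂ))

lemma term_lemma (d : ℕ) (hd : d ≠ 0) (m n : ℤ) :
    (starRingEnd ℂ) (ee d m / (Real.sqrt d : ℂ)) * (ee d n / (Real.sqrt d : ℂ))
      = ee d (n - m) / d := by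
  rw [map_div₀, conj_ee, Complex.conj_ofReal]
  rw [div_mul_div_comm, ← Complex.ofReal_mul,
    Real.mul_self_sqrt (Nat.cast_nonneg d), ← ee_add]
  norm_num
  congr 2
  ring

lemma inner_V (d : ℕ) (hd : d ≠ 0) (t t' : ℕ) (b c : Fin d) :
    ⟪V d t b, V d t' c⟫_ℂ =
      (∑ a ∈ range d, ee d (((t':ℤ) - t)*(d+1)*(a:ℤ)^2 + 2*a*((c:ℕ) - (b:ℕ)))) / d := by
  rw [PiLp.inner_apply]
  simp only [RCLike.inner_apply', V, PiLp.toLp_apply]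
  have step : (∑ x : Fin d, (starRingEnd ℂ)
        (ee d (t*(d+1)*((x:ℕ):ℤ)^2 + 2*x*b) / (Real.sqrt d : ℂ))
        * (ee d (t'*(d+1)*((x:ℕ):ℤ)^2 + 2*x*c) / (Real.sqrt d : ℂ)))
      = ∑ x : Fin d,
        ee d (((t':ℤ) - t)*(d+1)*((x:ℕ):ℤ)^2 + 2*(x:ℕ)*((c:ℕ) - (b:ℕ))) / d := by
    apply Finset.sum_congr rfl
    intro a _
    rw [term_lemma d hd]
    congr 2
    push_cast
    ring
  rw [step, Fin.sum_univ_eq_sum_range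
    (fun a : ℕ => ee d (((t':ℤ) - t)*(d+1)*(a:ℤ)^2 + 2*(a:ℕ)*((c:ℕ) - (b:ℕ))) / d),
    ← Finset.sum_div]

lemma orthonormal_V (d : ℕ) (hd : d ≠ 0) (t : ℕ) : Orthonormal ℂ (V d t) := by
  rw [orthonormal_iff_ite]
  intro b c
  rw [inner_V d hd]
  have : ∀ a : ℕ, ((t:ℤ) - t)*(d+1)*(a:ℤ)^2 + 2*(a:ℤ)*((c:ℕ) - (b:ℕ)) = 2*a*((c:ℕ) - (b:ℕ)) := by
    intro a; ring
  simp_rw [this, sum_ee d hd]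
  by_cases h : b = c
  · subst h
    simp [div_self (show (d:ℂ) ≠ 0 from Nat.cast_ne_zero.2 hd)]
  · have : ¬ ((d:ℤ) ∣ ((c:ℕ):ℤ) - ((b:ℕ):ℤ)) := by
      intro H
      have := Int.eq_zero_of_abs_lt_dvd H (by
        have hb := b.isLt; have hc := c.isLt
        rw [abs_lt]; omega)
      exact h (by apply Fin.ext; omega)
    rw [if_neg this, if_neg h, zero_div]

lemma unbiased_V (d : ℕ) (hd : d ≠ 0) (b c : Fin d) :
    ⟪V d 0 b, V d 1 c⟫_ℂ * (starRingEnd ℂ) ⟪V d 0 b, V d 1 c⟫_ℂ = 1 / d := by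
  rw [inner_V d hd]
  have : ∀ a : ℕ, (((1:ℕ):ℤ) - ((0:ℕ):ℤ))*(d+1)*(a:ℤ)^2 + 2*a*((c:ℕ) - (b:ℕ))
      = (d+1)*(a:ℤ)^2 + 2*a*((c:ℕ) - (b:ℕ)) := by intro a; push_cast; ring
  simp_rw [this]
  rw [map_div₀, div_mul_div_comm, gauss d hd]
  rw [Complex.conj_natCast]
  have hdc : (d:ℂ) ≠ 0 := Nat.cast_ne_zero.2 hd
  field_simp

lemma mub_card_le (d m : ℕ) (hd : 2 ≤ d) (B : Fin m → Fin d → EuclideanSpace ℂ (Fin d))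
    (hB : IsMUBFamily d m B) : m ≤ d * d := by
  have hd0 : d ≠ 0 := by omega
  haveI : NeZero d := ⟨hd0⟩
  set u : Fin m → EuclideanSpace ℂ (Fin d) := fun i => B i (0 : Fin d) with hu
  set T : Fin m → EuclideanSpace ℂ (Fin d × Fin d) :=
    fun i => WithLp.toLp 2 (fun p : Fin d × Fin d => (starRingEnd ℂ) (u i p.2) * u i p.1) with hT
  have gram0 : ∀ i j, ⟪T i, T j⟫_ℂ = ⟪u i, u j⟫_ℂ * (starRingEnd ℂ) ⟪u i, u j⟫_ℂ := by
    intro i j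
    rw [show ⟪u i, u j⟫_ℂ = ∑ a, (starRingEnd ℂ) (u i a) * u j a by
      rw [PiLp.inner_apply]; simp only [RCLike.inner_apply']]
    rw [map_sum, Finset.sum_mul_sum]
    rw [show ⟪T i, T j⟫_ℂ = ∑ p, (starRingEnd ℂ) (T i p) * T j p by
      rw [PiLp.inner_apply]; simp only [RCLike.inner_apply']]
    rw [Fintype.sum_prod_type]
    apply Finset.sum_congr rfl; intro a _
    apply Finset.sum_congr rfl; intro b _
    simp only [hT, PiLp.toLp_apply, map_mul, Complex.conj_conj]
    ring
  have gram : ∀ i j, ⟪T i, T j⟫_ℂ = if i = j then 1 else (1/d : ℂ) := by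
    intro i j
    rw [gram0, Complex.mul_conj]
    by_cases h : i = j
    · subst h
      rw [if_pos rfl]
      have h1 : ⟪u i, u i⟫_ℂ = 1 := ((orthonormal_iff_ite.mp (hB.1 i).1) 0 0).trans (by simp)
      rw [h1]; simp
    · rw [if_neg h]
      have h2 := hB.2 i j h 0 0
      rw [Complex.sq_norm] at h2
      rw [h2]
      push_cast
      ring
  have hli : LinearIndependent ℂ T := by
    rw [Fintype.linearIndependent_iff]
    intro c hc i
    have h0 : ⟪∑ i, c i • T i, ∑ j, c j • T j⟫_ℂ = 0 := by rw [hc]; simp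
    rw [sum_inner] at h0
    simp_rw [inner_sum, inner_smul_left, inner_smul_right, gram] at h0
    have hsplit : ∀ i' j : Fin m, (starRingEnd ℂ) (c i') * (c j * (if i' = j then 1 else (1/d : ℂ)))
        = (starRingEnd ℂ) (c i') * c j / d
          + (if i' = j then (starRingEnd ℂ) (c i') * c j * (1 - 1/d) else 0) := by
      intro i' j
      by_cases h : i' = j
      · subst h; rw [if_pos rfl, if_pos rfl]; ring
      · rw [if_neg h, if_neg h]; ring
    simp_rw [hsplit, Finset.sum_add_distrib] at h0
    have hdiag : ∀ i' : Fin m,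
        (∑ j, if i' = j then (starRingEnd ℂ) (c i') * c j * (1 - 1/d) else 0)
        = (starRingEnd ℂ) (c i') * c i' * (1 - 1/d) := by
      intro i'
      rw [Finset.sum_ite_eq]
      simp
    simp_rw [hdiag] at h0
    -- h0 : ∑ i', (∑ j, conj c i' * c j / d) + ∑ i', conj c i' * c i' * (1-1/d) = 0
    have key : ((Complex.normSq (∑ j, c j) / d : ℝ) : ℂ)
        + ((1 - 1/d : ℝ) : ℂ) * ((∑ i', Complex.normSq (c i') : ℝ) : ℂ) = 0 := by
      rw [← h0]
      push_cast
      simp_rw [Complex.normSq_eq_conj_mul_self, map_sum, Finset.sum_mul_sum,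
        Finset.sum_div, Finset.mul_sum]
      simp_rw [mul_comm ((1:ℂ) - 1/(d:ℂ))]
    have hr : Complex.normSq (∑ j, c j) / d + (1 - 1/d) * (∑ i', Complex.normSq (c i')) = 0 := by
      exact_mod_cast key
    have hdr : (2:ℝ) ≤ d := by exact_mod_cast hd
    have h1 : (0:ℝ) ≤ Complex.normSq (∑ j, c j) / d := div_nonneg (Complex.normSq_nonneg _) (by linarith)
    have h2 : (0:ℝ) ≤ ∑ i', Complex.normSq (c i') :=
      Finset.sum_nonneg (fun _ _ => Complex.normSq_nonneg _)
    have h3 : (0:ℝ) < 1 - 1/d := by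
      rw [sub_pos, div_lt_one (by linarith)]; linarith
    have hsz : ∑ i', Complex.normSq (c i') = 0 := by nlinarith
    have hz := (Finset.sum_eq_zero_iff_of_nonneg
      (fun j _ => Complex.normSq_nonneg (c j))).mp hsz i (mem_univ i)
    exact Complex.normSq_eq_zero.mp hz
  have hcard := hli.fintype_card_le_finrank
  simpa [finrank_euclideanSpace, Fintype.card_prod, Fintype.card_fin] using hcard

lemma span_top_of_orthonormal {d : ℕ} {w : Fin d → EuclideanSpace ℂ (Fin d)}
    (hw : Orthonormal ℂ w) : Submodule.span ℂ (Set.range w) = ⊤ := by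
  apply hw.linearIndependent.span_eq_top_of_card_eq_finrank'
  simp [finrank_euclideanSpace_fin]

lemma abs_sq_symm {E : Type*} [NormedAddCommGroup E] [InnerProductSpace ℂ E] (x y : E) :
    ‖⟪x, y⟫_ℂ‖ ^ 2 = ‖⟪y, x⟫_ℂ‖ ^ 2 := by
  rw [← inner_conj_symm y x, Complex.norm_conj]

lemma abs_std_V (d : ℕ) (t : ℕ) (x : Fin d) (b : Fin d) :
    ‖⟪EuclideanSpace.single x (1:ℂ), V d t b⟫_ℂ‖ ^ 2 = 1 / d := by
  rw [EuclideanSpace.inner_single_left]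
  simp only [map_one, one_mul]
  show ‖ee d _ / (Real.sqrt d : ℂ)‖ ^ 2 = _
  rw [norm_div, abs_ee, Complex.norm_of_nonneg (Real.sqrt_nonneg _)]
  rw [div_pow, one_pow, Real.sq_sqrt (Nat.cast_nonneg d)]

lemma abs_V01 (d : ℕ) (hd : d ≠ 0) (b c : Fin d) :
    ‖⟪V d 0 b, V d 1 c⟫_ℂ‖ ^ 2 = 1 / d := by
  have h := unbiased_V d hd b c
  rw [Complex.mul_conj] at h
  rw [Complex.sq_norm]
  have h2 : ((Complex.normSq ⟪V d 0 b, V d 1 c⟫_ℂ : ℝ) : ℂ) = ((1/d : ℝ) : ℂ) := by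
    rw [h]; push_cast; ring
  exact_mod_cast h2

noncomputable def Bfam (d : ℕ) : Fin 3 → Fin d → EuclideanSpace ℂ (Fin d)
  | 0 => fun a => EuclideanSpace.single a (1:ℂ)
  | 1 => V d 0
  | 2 => V d 1

lemma Bfam_isMUB (d : ℕ) (hd : 2 ≤ d) : IsMUBFamily d 3 (Bfam d) := by
  have hd0 : d ≠ 0 := by omega
  have hon0 : Orthonormal ℂ (fun a : Fin d => EuclideanSpace.single a (1:ℂ)) := by
    have := EuclideanSpace.orthonormal_single (𝕜 := ℂ) (ι := Fin d)
    simpa using this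
  constructor
  · intro i
    fin_cases i
    · exact ⟨hon0, span_top_of_orthonormal hon0⟩
    · exact ⟨orthonormal_V d hd0 0, span_top_of_orthonormal (orthonormal_V d hd0 0)⟩
    · exact ⟨orthonormal_V d hd0 1, span_top_of_orthonormal (orthonormal_V d hd0 1)⟩
  · intro i j hij a b
    fin_cases i <;> fin_cases j
    · exact absurd rfl hij
    · exact abs_std_V d 0 a b
    · exact abs_std_V d 1 a b
    · exact (abs_sq_symm _ _).trans (abs_std_V d 0 b a)
    · exact absurd rfl hij
    · exact abs_V01 d hd0 a b
    · exact (abs_sq_symm _ _).trans (abs_std_V d 1 b a)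
    · exact (abs_sq_symm _ _).trans (abs_V01 d hd0 b a)
    · exact absurd rfl hij

/-- In every dimension `d ≥ 2` there exist at least three pairwise mutually
unbiased orthonormal bases of `ℂ^d`; in particular `N(d) ≥ 3`. -/
theorem three_mubs (d : ℕ) (hd : 2 ≤ d) :
    (∃ B : Fin 3 → Fin d → EuclideanSpace ℂ (Fin d), IsMUBFamily d 3 B) ∧
    3 ≤ N d := by
  have hB := Bfam_isMUB d hd
  refine ⟨⟨Bfam d, hB⟩, ?_⟩
  apply le_csSup
  · exact ⟨d*d, fun m hm => by
      obtain ⟨B', hB'⟩ := hm; exact mub_card_le d m hd B' hB'⟩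
  · exact ⟨Bfam d, hB⟩
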